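/- In the β-bias uniform model with K ≤ n, let S be the set of the K candidates with the largest observed utilities and define α₁ := K − (n₂/(β·n₁ + n₂))·max{K − (1−β)·n₁, 0} and α₂ := K − α₁. Then there is a universal constant C > 0 such that with probability at least 1 − C/n², for both j ∈ {1,2}, | |S ∩ G_j| − α_j | ≤ C·√(n·log n). -/

import Mathlib

open MeasureTheory ProbabilityTheory Finset

/-- The set of the `K` candidates with the largest values of `x` (assuming the values of
`x` are pairwise distinct): `i` belongs to `topK K x` iff at most `K` candidates `j`
(including `i` itself) satisfy `x i ≤ x j`. -/
noncomputable def topK {n : ℕ} (K : ℕ) (x : Fin n → ℝ) : Finset (Fin n) :=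
  Finset.univ.filter fun i => (Finset.univ.filter fun j => x i ≤ x j).card ≤ K

/-- Observed utilities in the β-bias model: `û_i = u_i` on `G₁` and `û_i = β·u_i` on the
complement of `G₁`. -/
noncomputable def obsUtil {n : ℕ} (G₁ : Finset (Fin n)) (β : ℝ) (u : Fin n → ℝ) :
    Fin n → ℝ :=
  fun i => if i ∈ G₁ then u i else β * u i

/-- `α₁ = K − (n₂/(β·n₁ + n₂))·max{K − (1−β)·n₁, 0}`. -/
noncomputable def alpha1 (K n₁ n₂ : ℕ) (β : ℝ) : ℝ :=
  (K : ℝ) - ((n₂ : ℝ) / (β * n₁ + n₂)) * max ((K : ℝ) - (1 - β) * n₁) 0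


noncomputable def pclamp (c : ℝ) : ℝ := max (min (1 - c) 1) 0

lemma pclamp_nonneg (c : ℝ) : 0 ≤ pclamp c := le_max_right _ _

lemma pclamp_le_one (c : ℝ) : pclamp c ≤ 1 :=
  max_le (min_le_right _ _) zero_le_one

lemma pclamp_anti : Antitone pclamp := by
  intro a b hab
  exact max_le_max (min_le_min (by linarith) le_rfl) le_rfl

lemma pclamp_continuous : Continuous pclamp :=
  ((continuous_const.sub continuous_id).min continuous_const).max continuous_const

lemma pclamp_of_nonpos {c : ℝ} (hc : c ≤ 0) : pclamp c = 1 := by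
  unfold pclamp
  rw [min_eq_right (by linarith), max_eq_left (by linarith)]

lemma pclamp_of_mem {c : ℝ} (h0 : 0 ≤ c) (h1 : c ≤ 1) : pclamp c = 1 - c := by
  unfold pclamp
  rw [min_eq_left (by linarith), max_eq_left (by linarith)]

lemma pclamp_of_ge {c : ℝ} (hc : 1 ≤ c) : pclamp c = 0 := by
  unfold pclamp
  rw [max_eq_right (min_le_of_left_le (by linarith))]

lemma uniform_Ioi (c : ℝ) :
    ((volume.restrict (Set.Icc (0 : ℝ) 1)) (Set.Ioi c)).toReal = pclamp c := by
  rw [Measure.restrict_apply measurableSet_Ioi]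
  rcases lt_or_ge c 0 with hc | hc
  · have : Set.Ioi c ∩ Set.Icc (0 : ℝ) 1 = Set.Icc 0 1 := by
      ext y; simp only [Set.mem_inter_iff, Set.mem_Ioi, Set.mem_Icc]
      constructor
      · rintro ⟨-, h⟩; exact h
      · rintro ⟨h0, h1⟩; exact ⟨lt_of_lt_of_le hc h0, h0, h1⟩
    rw [this, Real.volume_Icc, ENNReal.toReal_ofReal (by norm_num),
      pclamp_of_nonpos hc.le]; norm_num
  · rcases le_or_gt c 1 with hc1 | hc1
    · have : Set.Ioi c ∩ Set.Icc (0 : ℝ) 1 = Set.Ioc c 1 := by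
        ext y; simp only [Set.mem_inter_iff, Set.mem_Ioi, Set.mem_Icc, Set.mem_Ioc]
        constructor
        · rintro ⟨h, -, h1⟩; exact ⟨h, h1⟩
        · rintro ⟨h, h1⟩; exact ⟨h, le_of_lt (lt_of_le_of_lt hc h), h1⟩
      rw [this, Real.volume_Ioc, ENNReal.toReal_ofReal (by linarith),
        pclamp_of_mem hc hc1]
    · have : Set.Ioi c ∩ Set.Icc (0 : ℝ) 1 = ∅ := by
        ext y; simp only [Set.mem_inter_iff, Set.mem_Ioi, Set.mem_Icc, Set.mem_empty_iff_false,
          iff_false, not_and]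
        intro h h0; intro h1; linarith
      rw [this, measure_empty, ENNReal.toReal_zero, pclamp_of_ge hc1.le]

section TopK

variable {n K : ℕ} {x : Fin n → ℝ} {t : ℝ}

lemma topK_subset (h : K ≤ (Finset.univ.filter fun i => t < x i).card) :
    topK K x ⊆ Finset.univ.filter fun i => t < x i := by
  intro i hi
  simp only [topK, mem_filter, mem_univ, true_and] at hi ⊢
  by_contra hti
  push_neg at hti
  have hsub : insert i (Finset.univ.filter fun j => t < x j)
      ⊆ Finset.univ.filter fun j => x i ≤ x j := by
    intro j hj
    rcases Finset.mem_insert.1 hj with rfl | hj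
    · simp
    · simp only [mem_filter, mem_univ, true_and] at hj ⊢
      exact le_of_lt (lt_of_le_of_lt hti hj)
  have hni : i ∉ Finset.univ.filter fun j => t < x j := by
    simp [hti, not_lt.2 hti]
  have := Finset.card_le_card hsub
  rw [Finset.card_insert_of_notMem hni] at this
  omega

lemma subset_topK (h : (Finset.univ.filter fun i => t < x i).card ≤ K) :
    (Finset.univ.filter fun i => t < x i) ⊆ topK K x := by
  intro i hi
  simp only [mem_filter, mem_univ, true_and] at hi
  simp only [topK, mem_filter, mem_univ, true_and]
  refine le_trans (Finset.card_le_card ?_) h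
  intro j hj
  simp only [mem_filter, mem_univ, true_and] at hj ⊢
  exact lt_of_lt_of_le hi hj

lemma card_topK_le : (topK K x).card ≤ K := by
  by_contra h
  push_neg at h
  have hne : (topK K x).Nonempty := Finset.card_pos.1 (by omega)
  obtain ⟨i, hi, hmin⟩ := Finset.exists_min_image (topK K x) x hne
  have hsub : topK K x ⊆ Finset.univ.filter fun j => x i ≤ x j := by
    intro j hj
    simp only [mem_filter, mem_univ, true_and]
    exact hmin j hj
  have hiK : (Finset.univ.filter fun j => x i ≤ x j).card ≤ K := by
    have := hi
    simpa [topK] using this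
  have := Finset.card_le_card hsub
  omega

lemma card_topK (hinj : Function.Injective x) (hK : K ≤ n) : (topK K x).card = K := by
  classical
  set r : Fin n → ℕ := fun i => (Finset.univ.filter fun j => x i ≤ x j).card with hr
  have hrinj : Function.Injective r := by
    intro i j hij
    by_contra hne
    rcases lt_or_gt_of_ne (fun hx => hne (hinj hx)) with hlt | hlt
    · have : (Finset.univ.filter fun k => x j ≤ x k) ⊂ Finset.univ.filter fun k => x i ≤ x k := by
        refine Finset.ssubset_iff_of_subset ?_ |>.2 ⟨i, ?_, ?_⟩
        · intro k hk
          simp only [mem_filter, mem_univ, true_and] at hk ⊢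
          exact hlt.le.trans hk
        · simp
        · simp [not_le.2 hlt]
      have := Finset.card_lt_card this
      simp only [hr] at hij; omega
    · have : (Finset.univ.filter fun k => x i ≤ x k) ⊂ Finset.univ.filter fun k => x j ≤ x k := by
        refine Finset.ssubset_iff_of_subset ?_ |>.2 ⟨j, ?_, ?_⟩
        · intro k hk
          simp only [mem_filter, mem_univ, true_and] at hk ⊢
          exact hlt.le.trans hk
        · simp
        · simp [not_le.2 hlt]
      have := Finset.card_lt_card this
      simp only [hr] at hij; omega
  have himg : (Finset.univ : Finset (Fin n)).image r = Finset.Icc 1 n := by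
    apply Finset.eq_of_subset_of_card_le
    · intro m hm
      simp only [Finset.mem_image, mem_univ, true_and] at hm
      obtain ⟨i, rfl⟩ := hm
      simp only [Finset.mem_Icc]
      constructor
      · have : i ∈ Finset.univ.filter fun j => x i ≤ x j := by simp
        exact Finset.card_pos.2 ⟨i, this⟩
      · exact le_trans (Finset.card_le_card (Finset.subset_univ _)) (by simp)
    · rw [Finset.card_image_of_injective _ hrinj]
      simp [Nat.card_Icc]
  have : topK K x = Finset.univ.filter fun i => r i ≤ K := rfl
  rw [this, ← Finset.card_image_of_injective _ hrinj]
  have h2 : (Finset.univ.filter fun i => r i ≤ K).image r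
      = (Finset.univ.image r).filter (fun m => m ≤ K) :=
    (Finset.filter_image (p := fun m => m ≤ K)).symm
  rw [h2, himg]
  have h3 : (Finset.Icc 1 n).filter (fun m => m ≤ K) = Finset.Icc 1 K := by
    ext m; simp only [Finset.mem_filter, Finset.mem_Icc]; omega
  rw [h3, Nat.card_Icc]; omega

end TopK

lemma exp_sub_one_sub_le {t : ℝ} (ht : |t| ≤ 1) : Real.exp t - 1 - t ≤ t ^ 2 := by
  have h := Real.exp_bound ht (n := 2) (by norm_num)
  have hsum : ∑ m ∈ Finset.range 2, t ^ m / m.factorial = 1 + t := by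
    simp [Finset.sum_range_succ]
  rw [hsum] at h
  have h2 : |t| ^ 2 = t ^ 2 := sq_abs t
  have h3 := (abs_le.1 h).2
  norm_num [Nat.factorial] at h3
  nlinarith [sq_nonneg t]

lemma chernoff_indicator {n : ℕ} (hn : 1 ≤ n) {Ω : Type} [MeasurableSpace Ω]
    (μ : Measure Ω) [IsProbabilityMeasure μ] (u : Fin n → Ω → ℝ)
    (hmeas : ∀ i, Measurable (u i))
    (hind : iIndepFun u μ)
    (hlaw : ∀ i, Measure.map (u i) μ = volume.restrict (Set.Icc (0 : ℝ) 1))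
    (s : Finset (Fin n)) (d : Fin n → ℝ) (Δ : ℝ) (hΔ : 0 ≤ Δ) :
    μ {ω | Δ ≤ |((s.filter fun i => d i < u i ω).card : ℝ) - ∑ i ∈ s, pclamp (d i)|}
      ≤ ENNReal.ofReal (2 * Real.exp (-Δ ^ 2 / (4 * n))) := by
  classical
  have hn0 : (0 : ℝ) < n := by exact_mod_cast hn
  set Z : Fin n → Ω → ℝ :=
    fun i ω => (if d i < u i ω then (1 : ℝ) else 0) - pclamp (d i) with hZ
  have hgmeas : ∀ i, Measurable
      (fun x : ℝ => (if d i < x then (1 : ℝ) else 0) - pclamp (d i)) := by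
    intro i
    exact ((measurable_const.ite measurableSet_Ioi measurable_const).sub measurable_const)
  have hZmeas : ∀ i, Measurable (Z i) := fun i => (hgmeas i).comp (hmeas i)
  have hZind : iIndepFun Z μ := hind.comp _ hgmeas
  have hZbdd : ∀ i ω, |Z i ω| ≤ 1 := by
    intro i ω
    have h0 := pclamp_nonneg (d i); have h1 := pclamp_le_one (d i)
    simp only [hZ]
    by_cases h : d i < u i ω <;> simp [h, abs_le] <;> constructor <;> linarith
  have hEY : ∀ i, (μ {ω | d i < u i ω}).toReal = pclamp (d i) := by
    intro i
    have h1 : {ω | d i < u i ω} = u i ⁻¹' Set.Ioi (d i) := rfl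
    rw [h1, ← Measure.map_apply (hmeas i) measurableSet_Ioi, hlaw i, uniform_Ioi]
  have hXeq : ∀ ω, ((s.filter fun i => d i < u i ω).card : ℝ) - ∑ i ∈ s, pclamp (d i)
      = (∑ i ∈ s, Z i) ω := by
    intro ω
    rw [Finset.card_filter, Finset.sum_apply]
    push_cast
    rw [← Finset.sum_sub_distrib]
  have hint : ∀ (t : ℝ) i, Integrable (fun ω => Real.exp (t * Z i ω)) μ := by
    intro t i
    refine Integrable.mono' (integrable_const (Real.exp |t|))
      (((hZmeas i).const_mul t).exp.aestronglyMeasurable)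
      (Filter.Eventually.of_forall fun ω => ?_)
    rw [Real.norm_eq_abs, Real.abs_exp]
    apply Real.exp_le_exp.2
    calc t * Z i ω ≤ |t * Z i ω| := le_abs_self _
      _ = |t| * |Z i ω| := abs_mul _ _
      _ ≤ |t| * 1 := mul_le_mul_of_nonneg_left (hZbdd i ω) (abs_nonneg t)
      _ = |t| := mul_one _
  have hindic : ∀ i, (fun ω => if d i < u i ω then (1:ℝ) else 0)
      = Set.indicator (u i ⁻¹' Set.Ioi (d i)) (1 : Ω → ℝ) := by
    intro i; funext ω
    by_cases h : d i < u i ω <;> simp [Set.indicator_apply, Set.mem_preimage, h]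
  have hintind : ∀ i, Integrable (fun ω => if d i < u i ω then (1:ℝ) else 0) μ := by
    intro i
    rw [hindic i]
    exact (integrable_const (1:ℝ)).indicator (hmeas i measurableSet_Ioi)
  have hmgf : ∀ t : ℝ, |t| ≤ 1 → ∀ i, mgf (Z i) μ t ≤ Real.exp (t ^ 2) := by
    intro t ht i
    have hp0 : 0 ≤ pclamp (d i) := pclamp_nonneg _
    have hp1 : pclamp (d i) ≤ 1 := pclamp_le_one _
    set p := pclamp (d i) with hp
    have hmgfeq : mgf (Z i) μ t = Real.exp (-(t * p)) * (1 + (Real.exp t - 1) * p) := by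
      unfold mgf
      have e1 : ∀ ω, Real.exp (t * Z i ω)
          = Real.exp (-(t * p)) * (1 + (Real.exp t - 1) * (if d i < u i ω then (1:ℝ) else 0)) := by
        intro ω
        by_cases h : d i < u i ω
        · simp only [hZ, if_pos h, ← hp]
          rw [show (1:ℝ) + (Real.exp t - 1) * 1 = Real.exp t by ring, ← Real.exp_add]
          congr 1; ring
        · simp only [hZ, if_neg h, ← hp]
          rw [show (1:ℝ) + (Real.exp t - 1) * 0 = 1 by ring, mul_one]
          congr 1; ring
      calc (∫ ω, Real.exp (t * Z i ω) ∂μ)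
          = ∫ ω, Real.exp (-(t * p))
              * (1 + (Real.exp t - 1) * (if d i < u i ω then (1:ℝ) else 0)) ∂μ :=
            integral_congr_ae (Filter.Eventually.of_forall e1)
        _ = Real.exp (-(t * p)) * ∫ ω, (1 + (Real.exp t - 1)
              * (if d i < u i ω then (1:ℝ) else 0)) ∂μ := integral_const_mul _ _
        _ = Real.exp (-(t * p)) * (1 + (Real.exp t - 1) * p) := by
            rw [integral_add (integrable_const 1) ((hintind i).const_mul _), integral_const]
            simp only [measure_univ, probReal_univ, one_smul]
            rw [integral_const_mul, hindic i,
              show integral μ ((u i ⁻¹' Set.Ioi (d i)).indicator (1 : Ω → ℝ))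
                = (μ (u i ⁻¹' Set.Ioi (d i))).toReal
                from integral_indicator_one (hmeas i measurableSet_Ioi)]
            rw [show u i ⁻¹' Set.Ioi (d i) = {ω | d i < u i ω} from rfl, hEY i, hp]
    rw [hmgfeq]
    have h1 : 1 + (Real.exp t - 1) * p ≤ Real.exp ((Real.exp t - 1) * p) := by
      have := Real.add_one_le_exp ((Real.exp t - 1) * p)
      linarith
    calc Real.exp (-(t * p)) * (1 + (Real.exp t - 1) * p)
        ≤ Real.exp (-(t * p)) * Real.exp ((Real.exp t - 1) * p) :=
          mul_le_mul_of_nonneg_left h1 (Real.exp_pos _).le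
      _ = Real.exp (p * (Real.exp t - 1 - t)) := by rw [← Real.exp_add]; ring_nf
      _ ≤ Real.exp (t ^ 2) := by
          apply Real.exp_le_exp.2
          have hnn : 0 ≤ Real.exp t - 1 - t := by
            have := Real.add_one_le_exp t; linarith
          calc p * (Real.exp t - 1 - t) ≤ 1 * (Real.exp t - 1 - t) :=
                mul_le_mul_of_nonneg_right hp1 hnn
            _ = Real.exp t - 1 - t := one_mul _
            _ ≤ t ^ 2 := exp_sub_one_sub_le ht
  have hintS : ∀ t : ℝ, Integrable (fun ω => Real.exp (t * (∑ i ∈ s, Z i) ω)) μ :=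
    fun t => hZind.integrable_exp_mul_sum hZmeas (fun i _ => hint t i)
  have hmgfS : ∀ t : ℝ, |t| ≤ 1 → mgf (∑ i ∈ s, Z i) μ t ≤ Real.exp (n * t ^ 2) := by
    intro t ht
    rw [hZind.mgf_sum hZmeas s]
    calc ∏ i ∈ s, mgf (Z i) μ t ≤ ∏ i ∈ s, Real.exp (t ^ 2) :=
          Finset.prod_le_prod (fun i _ => mgf_nonneg) (fun i _ => hmgf t ht i)
      _ = Real.exp (t ^ 2) ^ s.card := Finset.prod_const _
      _ = Real.exp (s.card * t ^ 2) := by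
          rw [← Real.exp_nat_mul]
      _ ≤ Real.exp (n * t ^ 2) := by
          apply Real.exp_le_exp.2
          have : (s.card : ℝ) ≤ n := by
            exact_mod_cast (Finset.card_le_univ s).trans_eq (by simp)
          nlinarith [sq_nonneg t]
  have hEsub : {ω | Δ ≤ |((s.filter fun i => d i < u i ω).card : ℝ) - ∑ i ∈ s, pclamp (d i)|}
      ⊆ {ω | Δ ≤ (∑ i ∈ s, Z i) ω} ∪ {ω | (∑ i ∈ s, Z i) ω ≤ -Δ} := by
    intro ω hω
    simp only [Set.mem_setOf_eq, hXeq ω] at hω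
    simp only [Set.mem_union, Set.mem_setOf_eq]
    rcases le_abs.1 hω with h | h
    · exact Or.inl h
    · exact Or.inr (by linarith)
  rcases le_or_gt Δ (2 * n) with hΔ2 | hΔ2
  · set t0 : ℝ := Δ / (2 * n) with ht0def
    have ht0 : 0 ≤ t0 := div_nonneg hΔ (by linarith)
    have ht01 : t0 ≤ 1 := by
      rw [div_le_one (by linarith)]; exact hΔ2
    have ht0abs : |t0| ≤ 1 := abs_le.2 ⟨by linarith, ht01⟩
    have hexp : Real.exp (-t0 * Δ) * Real.exp (n * t0 ^ 2) = Real.exp (-Δ ^ 2 / (4 * n)) := by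
      rw [← Real.exp_add]
      congr 1
      rw [ht0def]
      field_simp
      ring
    have hup : (μ {ω | Δ ≤ (∑ i ∈ s, Z i) ω}).toReal ≤ Real.exp (-Δ ^ 2 / (4 * n)) := by
      calc (μ {ω | Δ ≤ (∑ i ∈ s, Z i) ω}).toReal
          ≤ Real.exp (-t0 * Δ) * mgf (∑ i ∈ s, Z i) μ t0 :=
            measure_ge_le_exp_mul_mgf Δ ht0 (hintS t0)
        _ ≤ Real.exp (-t0 * Δ) * Real.exp (n * t0 ^ 2) :=
            mul_le_mul_of_nonneg_left (hmgfS t0 ht0abs) (Real.exp_pos _).le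
        _ = _ := hexp
    have hlow : (μ {ω | (∑ i ∈ s, Z i) ω ≤ -Δ}).toReal ≤ Real.exp (-Δ ^ 2 / (4 * n)) := by
      calc (μ {ω | (∑ i ∈ s, Z i) ω ≤ -Δ}).toReal
          ≤ Real.exp (-(-t0) * -Δ) * mgf (∑ i ∈ s, Z i) μ (-t0) :=
            measure_le_le_exp_mul_mgf (-Δ) (neg_nonpos.2 ht0) (hintS (-t0))
        _ ≤ Real.exp (-t0 * Δ) * Real.exp (n * t0 ^ 2) := by
            rw [show -(-t0) * -Δ = -t0 * Δ by ring]
            refine mul_le_mul_of_nonneg_left ?_ (Real.exp_pos _).le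
            have := hmgfS (-t0) (by rwa [abs_neg])
            simpa using this
        _ = _ := hexp
    calc μ _ ≤ μ {ω | Δ ≤ (∑ i ∈ s, Z i) ω} + μ {ω | (∑ i ∈ s, Z i) ω ≤ -Δ} :=
          le_trans (measure_mono hEsub) (measure_union_le _ _)
      _ ≤ ENNReal.ofReal (Real.exp (-Δ ^ 2 / (4 * n)))
          + ENNReal.ofReal (Real.exp (-Δ ^ 2 / (4 * n))) := by
          gcongr
          · exact (ENNReal.le_ofReal_iff_toReal_le (measure_ne_top μ _)
              (Real.exp_pos _).le).2 hup
          · exact (ENNReal.le_ofReal_iff_toReal_le (measure_ne_top μ _)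
              (Real.exp_pos _).le).2 hlow
      _ = ENNReal.ofReal (2 * Real.exp (-Δ ^ 2 / (4 * n))) := by
          rw [← ENNReal.ofReal_add (Real.exp_pos _).le (Real.exp_pos _).le]
          congr 1; ring
  · have hempty : {ω | Δ ≤ |((s.filter fun i => d i < u i ω).card : ℝ)
        - ∑ i ∈ s, pclamp (d i)|} = ∅ := by
      ext ω
      simp only [Set.mem_setOf_eq, Set.mem_empty_iff_false, iff_false, not_le, hXeq ω]
      calc |(∑ i ∈ s, Z i) ω| = |∑ i ∈ s, Z i ω| := by rw [Finset.sum_apply]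
        _ ≤ ∑ i ∈ s, |Z i ω| := Finset.abs_sum_le_sum_abs _ _
        _ ≤ ∑ _i ∈ s, (1:ℝ) := Finset.sum_le_sum (fun i _ => hZbdd i _)
        _ = s.card := by simp
        _ ≤ n := by exact_mod_cast (Finset.card_le_univ s).trans_eq (by simp)
        _ < Δ := by linarith
    rw [hempty, measure_empty]
    exact zero_le


lemma iIndepFun_congr_ae {n : ℕ} {Ω : Type} [MeasurableSpace Ω] {μ : Measure Ω}
    {f g : Fin n → Ω → ℝ} (h : iIndepFun f μ)
    (hfg : ∀ i, f i =ᵐ[μ] g i) : iIndepFun g μ := by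
  rw [iIndepFun_iff_measure_inter_preimage_eq_mul] at h ⊢
  intro S sets hsets
  have hae : ∀ᵐ ω ∂μ, ∀ i, f i ω = g i ω := ae_all_iff.2 hfg
  have hpre : ∀ i : Fin n, (f i ⁻¹' sets i : Set Ω) =ᵐ[μ] (g i ⁻¹' sets i : Set Ω) := by
    intro i
    filter_upwards [hfg i] with ω hω
    show (f i ω ∈ sets i) = (g i ω ∈ sets i)
    rw [hω]
  have h1 : (⋂ i ∈ S, f i ⁻¹' sets i : Set Ω) =ᵐ[μ] (⋂ i ∈ S, g i ⁻¹' sets i : Set Ω) := by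
    filter_upwards [hae] with ω hω
    show (ω ∈ ⋂ i ∈ S, f i ⁻¹' sets i) = (ω ∈ ⋂ i ∈ S, g i ⁻¹' sets i)
    simp only [Set.mem_iInter, Set.mem_preimage, eq_iff_iff]
    exact forall₂_congr fun i _ => by rw [hω i]
  rw [← measure_congr h1, h S hsets]
  exact Finset.prod_congr rfl fun i _ => measure_congr (hpre i)

lemma null_line {Ω : Type} [MeasurableSpace Ω] {μ : Measure Ω} [IsProbabilityMeasure μ]
    {X Y : Ω → ℝ} (hX : Measurable X) (hY : Measurable Y)
    (hXl : Measure.map X μ = volume.restrict (Set.Icc (0 : ℝ) 1))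
    (hYl : Measure.map Y μ = volume.restrict (Set.Icc (0 : ℝ) 1))
    (hXY : IndepFun X Y μ) (a b : ℝ) (hb : b ≠ 0) :
    μ {ω | a * X ω = b * Y ω} = 0 := by
  have hset : MeasurableSet {p : ℝ × ℝ | a * p.1 = b * p.2} :=
    measurableSet_eq_fun (measurable_fst.const_mul a) (measurable_snd.const_mul b)
  have hmap : Measure.map (fun ω => (X ω, Y ω)) μ = (Measure.map X μ).prod (Measure.map Y μ) :=
    (indepFun_iff_map_prod_eq_prod_map_map hX.aemeasurable hY.aemeasurable).1 hXY
  have hpre : {ω | a * X ω = b * Y ω}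
      = (fun ω => (X ω, Y ω)) ⁻¹' {p : ℝ × ℝ | a * p.1 = b * p.2} := rfl
  rw [hpre, ← Measure.map_apply (hX.prodMk hY) hset, hmap, hXl, hYl,
    Measure.prod_apply hset]
  have hz : ∀ x : ℝ,
      (volume.restrict (Set.Icc (0 : ℝ) 1)) (Prod.mk x ⁻¹' {p : ℝ × ℝ | a * p.1 = b * p.2})
        = 0 := by
    intro x
    have h2 : (Prod.mk x ⁻¹' {p : ℝ × ℝ | a * p.1 = b * p.2}) = {y : ℝ | a * x = b * y} := rfl
    have h3 : {y : ℝ | a * x = b * y} = {a * x / b} := by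
      ext y
      simp only [Set.mem_setOf_eq, Set.mem_singleton_iff]
      rw [eq_div_iff hb]
      constructor <;> intro h <;> linarith
    rw [h2, h3]
    refine le_antisymm ?_ zero_le
    calc (volume.restrict (Set.Icc (0 : ℝ) 1)) {a * x / b}
        ≤ volume {a * x / b} := Measure.restrict_apply_le _ _
      _ = 0 := Real.volume_singleton
  simp only [hz, lintegral_zero]

lemma alpha1_nonneg {K n₁ n₂ : ℕ} {β : ℝ} (hβ0 : 0 < β) (hβ1 : β ≤ 1) (hd : 0 < β * (n₁:ℝ) + n₂) :
    0 ≤ alpha1 K n₁ n₂ β := by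
  unfold alpha1
  have h1 : (n₂:ℝ) / (β * n₁ + n₂) ≤ 1 := by
    rw [div_le_one hd]
    nlinarith [mul_nonneg hβ0.le (Nat.cast_nonneg n₁ : (0:ℝ) ≤ n₁)]
  have h2 : max ((K:ℝ) - (1 - β) * n₁) 0 ≤ K := by
    apply max_le _ (Nat.cast_nonneg K)
    nlinarith [(Nat.cast_nonneg n₁ : (0:ℝ) ≤ n₁)]
  have h3 : 0 ≤ max ((K:ℝ) - (1 - β) * n₁) 0 := le_max_right _ _
  nlinarith [div_nonneg (Nat.cast_nonneg n₂ : (0:ℝ) ≤ n₂) hd.le]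

lemma alpha1_le {K n₁ n₂ : ℕ} {β : ℝ} (hd : 0 < β * (n₁:ℝ) + n₂) :
    alpha1 K n₁ n₂ β ≤ K := by
  unfold alpha1
  have h3 : 0 ≤ max ((K:ℝ) - (1 - β) * n₁) 0 := le_max_right _ _
  have := div_nonneg (Nat.cast_nonneg n₂ : (0:ℝ) ≤ n₂) hd.le
  nlinarith

lemma alpha1_eq {K n₁ n₂ : ℕ} {β t : ℝ} (hβ0 : 0 < β) (hβ1 : β ≤ 1)
    (hd : 0 < β * (n₁:ℝ) + n₂) (ht0 : 0 ≤ t) (ht1 : t ≤ 1)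
    (hm : (n₁ : ℝ) * pclamp t + n₂ * pclamp (t / β) = K) :
    alpha1 K n₁ n₂ β = (n₁ : ℝ) * pclamp t := by
  unfold alpha1
  rcases le_or_gt β t with hbt | hbt
  · have h2 : pclamp (t / β) = 0 := pclamp_of_ge ((one_le_div hβ0).2 hbt)
    rw [h2, mul_zero, add_zero] at hm
    rw [pclamp_of_mem ht0 ht1] at hm ⊢
    have hmax : max ((K:ℝ) - (1 - β) * n₁) 0 = 0 := by
      apply max_eq_right
      nlinarith [(Nat.cast_nonneg n₁ : (0:ℝ) ≤ n₁)]
    rw [hmax, mul_zero, sub_zero]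
    linarith
  · have htβ0 : 0 ≤ t / β := div_nonneg ht0 hβ0.le
    have htβ1 : t / β ≤ 1 := (div_le_one hβ0).2 hbt.le
    rw [pclamp_of_mem htβ0 htβ1, pclamp_of_mem ht0 (le_trans hbt.le hβ1)] at hm
    rw [pclamp_of_mem ht0 (le_trans hbt.le hβ1)]
    have hmax : max ((K:ℝ) - (1 - β) * n₁) 0 = (K:ℝ) - (1 - β) * n₁ := by
      apply max_eq_left
      have h5 : 0 ≤ (n₂:ℝ) * (1 - t / β) := by
        apply mul_nonneg (Nat.cast_nonneg n₂); linarith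
      nlinarith [(Nat.cast_nonneg n₁ : (0:ℝ) ≤ n₁)]
    rw [hmax]
    have hβne : β ≠ 0 := hβ0.ne'
    have hdne : β * (n₁:ℝ) + n₂ ≠ 0 := hd.ne'
    field_simp at hm ⊢
    have hd' : (n₁:ℝ) * β + n₂ ≠ 0 := by rw [mul_comm]; exact hdne
    have key : (n₂:ℝ) * ((K:ℝ) - n₁ * (1 - β)) / ((n₁:ℝ) * β + n₂) = K - n₁ * (1 - t) := by
      rw [div_eq_iff hd']; linear_combination (n₁:ℝ) * hm
    linarith [key]

lemma comp_bound {n₁ n₂ : ℕ} {β : ℝ} (hβ : 0 < β) (a b : ℝ) :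
    |(n₁:ℝ) * pclamp a - n₁ * pclamp b|
      ≤ |((n₁:ℝ) * pclamp a + n₂ * pclamp (a / β))
          - ((n₁:ℝ) * pclamp b + n₂ * pclamp (b / β))| := by
  have key : ∀ x y : ℝ, x ≤ y →
      |(n₁:ℝ) * pclamp x - n₁ * pclamp y|
        ≤ |((n₁:ℝ) * pclamp x + n₂ * pclamp (x / β))
            - ((n₁:ℝ) * pclamp y + n₂ * pclamp (y / β))| := by
    intro x y hxy
    have h1 : pclamp y ≤ pclamp x := pclamp_anti hxy
    have h2 : pclamp (y / β) ≤ pclamp (x / β) :=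
      pclamp_anti ((div_le_div_iff_of_pos_right hβ).2 hxy)
    have hn1 : (0:ℝ) ≤ n₁ := Nat.cast_nonneg _
    have hn2 : (0:ℝ) ≤ n₂ := Nat.cast_nonneg _
    rw [abs_of_nonneg (by nlinarith), abs_of_nonneg (by nlinarith)]
    nlinarith
  rcases le_total a b with hab | hab
  · exact key a b hab
  · rw [abs_sub_comm, abs_sub_comm ((n₁:ℝ) * pclamp a + _) _]
    exact key b a hab

/-- In the β-bias uniform model with `K ≤ n`, with `S` the set of the
`K` candidates with the largest observed utilities, there is a universal constant
`C > 0` such that with probability at least `1 − C/n²`, for both `j ∈ {1,2}`,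
`| |S ∩ G_j| − α_j | ≤ C·√(n·log n)`. -/
theorem selection_counts_whp :
    ∃ C : ℝ, 0 < C ∧
      ∀ (n n₁ n₂ K : ℕ), 2 ≤ n → K ≤ n →
      ∀ (Ω : Type) (_ : MeasurableSpace Ω) (μ : Measure Ω), IsProbabilityMeasure μ →
      ∀ (u : Fin n → Ω → ℝ),
        iIndepFun u μ →
        (∀ i, Measure.map (u i) μ = volume.restrict (Set.Icc (0 : ℝ) 1)) →
      ∀ (G₁ G₂ : Finset (Fin n)), Disjoint G₁ G₂ → G₁ ∪ G₂ = Finset.univ →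
        G₁.card = n₁ → G₂.card = n₂ →
      ∀ (β : ℝ), 0 < β → β ≤ 1 →
      ENNReal.ofReal (1 - C / (n : ℝ) ^ 2) ≤
        μ {ω |
          |((topK K (obsUtil G₁ β fun i => u i ω) ∩ G₁).card : ℝ)
              - alpha1 K n₁ n₂ β| ≤ C * Real.sqrt (n * Real.log n) ∧
          |((topK K (obsUtil G₁ β fun i => u i ω) ∩ G₂).card : ℝ)
              - ((K : ℝ) - alpha1 K n₁ n₂ β)| ≤ C * Real.sqrt (n * Real.log n)} := by
    classical
  refine ⟨8, by norm_num, ?_⟩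
  intro n n₁ n₂ K hn hK Ω mΩ μ hμ u hind hlaw G₁ G₂ hdisj hunion hG₁ hG₂ β hβ0 hβ1
  have hn1 : 1 ≤ n := by omega
  have hnR : (2:ℝ) ≤ (n:ℝ) := by exact_mod_cast hn
  have hn0 : (0:ℝ) < n := by linarith
  have hlogn : 0 < Real.log n := Real.log_pos (by linarith)
  have hsq : 0 < Real.sqrt ((n:ℝ) * Real.log n) := Real.sqrt_pos.2 (mul_pos hn0 hlogn)
  set Δ : ℝ := 3 * Real.sqrt ((n:ℝ) * Real.log n) with hΔdef
  have hΔ0 : 0 < Δ := by rw [hΔdef]; linarith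
  have hn12 : n₁ + n₂ = n := by
    have h := Finset.card_union_of_disjoint hdisj
    rw [hunion, Finset.card_univ, Fintype.card_fin, hG₁, hG₂] at h
    omega
  have hn12R : (n₁:ℝ) + n₂ = n := by exact_mod_cast hn12
  have hdenom : 0 < β * (n₁:ℝ) + n₂ := by
    rcases Nat.eq_zero_or_pos n₂ with h2 | h2
    · have h1 : (1:ℝ) ≤ n₁ := by
        have h3 : 1 ≤ n₁ := by omega
        exact_mod_cast h3
      nlinarith [(Nat.cast_nonneg n₂ : (0:ℝ) ≤ n₂)]
    · have h1 : (1:ℝ) ≤ n₂ := by exact_mod_cast h2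
      nlinarith [mul_nonneg hβ0.le (Nat.cast_nonneg n₁ : (0:ℝ) ≤ n₁)]
  have hα0 : 0 ≤ alpha1 K n₁ n₂ β := alpha1_nonneg hβ0 hβ1 hdenom
  have hαK : alpha1 K n₁ n₂ β ≤ K := alpha1_le hdenom
  have hKR : (K:ℝ) ≤ n := by exact_mod_cast hK
  -- measurable modification
  have haem : ∀ i, AEMeasurable (u i) μ := by
    intro i
    by_contra h
    have h2 := hlaw i
    rw [Measure.map_of_not_aemeasurable h] at h2
    have h3 : (0:ENNReal) = (volume.restrict (Set.Icc (0:ℝ) 1)) Set.univ := by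
      rw [← h2]; simp
    rw [Measure.restrict_apply_univ, Real.volume_Icc] at h3
    simp only [sub_zero, ENNReal.ofReal_one] at h3
    exact zero_ne_one h3
  set v : Fin n → Ω → ℝ := fun i => (haem i).mk (u i) with hv
  have hvmeas : ∀ i, Measurable (v i) := fun i => (haem i).measurable_mk
  have hveq : ∀ i, u i =ᵐ[μ] v i := fun i => (haem i).ae_eq_mk
  have hvind : iIndepFun v μ := iIndepFun_congr_ae hind hveq
  have hvlaw : ∀ i, Measure.map (v i) μ = volume.restrict (Set.Icc (0:ℝ) 1) := by
    intro i; rw [← Measure.map_congr (hveq i)]; exact hlaw i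
  set c : Fin n → ℝ := fun i => if i ∈ G₁ then (1:ℝ) else β with hc
  have hcpos : ∀ i, 0 < c i := by
    intro i
    by_cases h : i ∈ G₁ <;> simp only [hc, h, if_true, if_false]
    · norm_num
    · exact hβ0
  set Z0 : Set Ω := {ω | ∃ i, u i ω ≠ v i ω} with hZ0
  set Z1 : Set Ω := {ω | ∃ i j : Fin n, i ≠ j ∧ c i * v i ω = c j * v j ω} with hZ1
  set Z2 : Set Ω := {ω | ∃ i, v i ω < 0} with hZ2
  have hZ0null : μ Z0 = 0 := by
    rw [hZ0]
    refine measure_mono_null (fun ω hω => ?_)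
      (measure_iUnion_null (s := fun i => {ω | u i ω ≠ v i ω}) fun i => ae_iff.1 (hveq i))
    obtain ⟨i, hi⟩ := hω
    exact Set.mem_iUnion.2 ⟨i, hi⟩
  have hZ1null : μ Z1 = 0 := by
    have hpair : ∀ i j : Fin n, μ {ω | i ≠ j ∧ c i * v i ω = c j * v j ω} = 0 := by
      intro i j
      by_cases hij : i = j
      · subst hij
        have he : {ω : Ω | i ≠ i ∧ c i * v i ω = c i * v i ω} = ∅ := by
          ext ω; simp
        rw [he, measure_empty]
      · exact measure_mono_null (fun ω hω => hω.2)
          (null_line (hvmeas i) (hvmeas j) (hvlaw i) (hvlaw j) (hvind.indepFun hij)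
            (c i) (c j) (hcpos j).ne')
    rw [hZ1]
    refine measure_mono_null (fun ω hω => ?_)
      (measure_iUnion_null fun i : Fin n =>
        measure_iUnion_null (s := fun j => {ω | i ≠ j ∧ c i * v i ω = c j * v j ω})
          fun j => hpair i j)
    obtain ⟨i, j, hij⟩ := hω
    exact Set.mem_iUnion.2 ⟨i, Set.mem_iUnion.2 ⟨j, hij⟩⟩
  have hZ2null : μ Z2 = 0 := by
    rw [hZ2]
    refine measure_mono_null (fun ω hω => ?_)
      (measure_iUnion_null (s := fun i => {ω | v i ω < 0}) fun i => ?_)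
    · obtain ⟨i, hi⟩ := hω; exact Set.mem_iUnion.2 ⟨i, hi⟩
    · show μ {ω | v i ω < 0} = 0
      have h1 : {ω | v i ω < 0} = v i ⁻¹' Set.Iio 0 := rfl
      have h2 : Set.Iio (0:ℝ) ∩ Set.Icc 0 1 = ∅ := by
        ext y
        simp only [Set.mem_inter_iff, Set.mem_Iio, Set.mem_Icc, Set.mem_empty_iff_false,
          iff_false]
        rintro ⟨hy, hy0, -⟩
        linarith
      rw [h1, ← Measure.map_apply (hvmeas i) measurableSet_Iio, hvlaw i,
        Measure.restrict_apply measurableSet_Iio, h2, measure_empty]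
  have hfrac0 : (0:ℝ) ≤ 8/(n:ℝ)^2 := by positivity
  have final : ∀ B T : Set Ω, μ B ≤ ENNReal.ofReal (8/(n:ℝ)^2) → Bᶜ ⊆ T →
      ENNReal.ofReal (1 - 8/(n:ℝ)^2) ≤ μ T := by
    intro B T hB hsub
    have h1 : (1:ENNReal) ≤ μ T + μ B := by
      calc (1:ENNReal) = μ Set.univ := measure_univ.symm
        _ ≤ μ (T ∪ B) := measure_mono (fun ω _ => by
            by_cases h : ω ∈ B
            · exact Or.inr h
            · exact Or.inl (hsub h))
        _ ≤ μ T + μ B := measure_union_le _ _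
    calc ENNReal.ofReal (1 - 8/(n:ℝ)^2)
        = ENNReal.ofReal 1 - ENNReal.ofReal (8/(n:ℝ)^2) := ENNReal.ofReal_sub _ hfrac0
      _ ≤ 1 - μ B := by
          rw [ENNReal.ofReal_one]
          exact tsub_le_tsub_left hB 1
      _ ≤ μ T := tsub_le_iff_right.2 h1
  have hchern : ∀ (s : Finset (Fin n)) (d : Fin n → ℝ),
      μ {ω | Δ ≤ |((s.filter fun i => d i < v i ω).card : ℝ) - ∑ i ∈ s, pclamp (d i)|}
        ≤ ENNReal.ofReal (2/(n:ℝ)^2) := by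
    intro s d
    refine le_trans (chernoff_indicator hn1 μ v hvmeas hvind hvlaw s d Δ hΔ0.le) ?_
    apply ENNReal.ofReal_le_ofReal
    have h1 : Δ^2/(4*(n:ℝ)) = 9/4 * Real.log n := by
      rw [hΔdef, mul_pow, Real.sq_sqrt (mul_pos hn0 hlogn).le]
      field_simp
      ring
    have h2 : -Δ^2/(4*(n:ℝ)) ≤ -(2 * Real.log n) := by
      rw [neg_div, h1]; linarith
    calc 2 * Real.exp (-Δ^2/(4*(n:ℝ))) ≤ 2 * Real.exp (-(2*Real.log n)) := by
          have h3 := Real.exp_le_exp.2 h2; linarith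
      _ = 2/(n:ℝ)^2 := by
          rw [Real.exp_neg, show (2:ℝ)*Real.log n = Real.log ((n:ℝ)^2) by
            rw [Real.log_pow]; push_cast; ring]
          rw [Real.exp_log (by positivity)]
          ring
  have hmem : ∀ ω : Ω, (∀ i, u i ω = v i ω) →
      Function.Injective (fun i => c i * v i ω) →
      |((topK K (fun i => c i * v i ω) ∩ G₁).card : ℝ) - alpha1 K n₁ n₂ β|
        ≤ 8 * Real.sqrt ((n:ℝ) * Real.log n) →
      ω ∈ {ω : Ω |
          |((topK K (obsUtil G₁ β fun i => u i ω) ∩ G₁).card : ℝ)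
              - alpha1 K n₁ n₂ β| ≤ 8 * Real.sqrt ((n:ℝ) * Real.log n) ∧
          |((topK K (obsUtil G₁ β fun i => u i ω) ∩ G₂).card : ℝ)
              - ((K : ℝ) - alpha1 K n₁ n₂ β)| ≤ 8 * Real.sqrt ((n:ℝ) * Real.log n)} := by
    intro ω h0 hinj h1
    have hx : (obsUtil G₁ β fun i => u i ω) = fun i => c i * v i ω := by
      funext i
      by_cases h : i ∈ G₁ <;> simp [obsUtil, hc, h, h0 i]
    simp only [Set.mem_setOf_eq, hx]
    refine ⟨h1, ?_⟩
    have hcards : (topK K (fun i => c i * v i ω)).card = K := card_topK hinj hK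
    have hsplit : (topK K (fun i => c i * v i ω) ∩ G₁).card
        + (topK K (fun i => c i * v i ω) ∩ G₂).card = K := by
      rw [← Finset.card_union_of_disjoint
        (Disjoint.mono Finset.inter_subset_right Finset.inter_subset_right hdisj)]
      rw [← Finset.inter_union_distrib_left, hunion, Finset.inter_univ, hcards]
    have hc2 : ((topK K (fun i => c i * v i ω) ∩ G₂).card : ℝ)
        = K - ((topK K (fun i => c i * v i ω) ∩ G₁).card : ℝ) := by
      have h2 := congrArg (Nat.cast : ℕ → ℝ) hsplit
      push_cast at h2
      linarith
    rw [hc2, show (K:ℝ) - ((topK K (fun i => c i * v i ω) ∩ G₁).card : ℝ)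
        - ((K:ℝ) - alpha1 K n₁ n₂ β)
        = -(((topK K (fun i => c i * v i ω) ∩ G₁).card : ℝ) - alpha1 K n₁ n₂ β) by ring,
      abs_neg]
    exact h1
  by_cases hKΔ : (K:ℝ) < Δ
  · refine final (Z0 ∪ Z1) _ ?_ ?_
    · rw [measure_union_null hZ0null hZ1null]
      exact zero_le
    · intro ω hω
      simp only [Set.mem_compl_iff, Set.mem_union, not_or] at hω
      obtain ⟨hω0, hω1⟩ := hω
      rw [hZ0] at hω0
      rw [hZ1] at hω1
      have h0 : ∀ i, u i ω = v i ω := by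
        intro i; by_contra h
        exact hω0 ⟨i, h⟩
      have hinj : Function.Injective (fun i => c i * v i ω) := by
        intro i j hij
        by_contra hne
        exact hω1 ⟨i, j, hne, hij⟩
      apply hmem ω h0 hinj
      have hcnt_le : ((topK K (fun i => c i * v i ω) ∩ G₁).card : ℝ) ≤ K := by
        have h3 : (topK K (fun i => c i * v i ω) ∩ G₁).card ≤ K :=
          le_trans (Finset.card_le_card Finset.inter_subset_left) card_topK_le
        exact_mod_cast h3
      have hcnt0 : (0:ℝ) ≤ ((topK K (fun i => c i * v i ω) ∩ G₁).card : ℝ) :=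
        Nat.cast_nonneg _
      rw [abs_le]
      constructor
      · linarith [hsq]
      · linarith [hsq]
  · push_neg at hKΔ
    set mfun : ℝ → ℝ := fun t => (n₁:ℝ) * pclamp t + (n₂:ℝ) * pclamp (t / β) with hmfun
    have hmcont : Continuous mfun := by
      apply Continuous.add
      · exact continuous_const.mul pclamp_continuous
      · exact continuous_const.mul (pclamp_continuous.comp (continuous_id.div_const β))
    have hm0 : mfun 0 = n := by
      simp only [hmfun]
      rw [zero_div, pclamp_of_nonpos le_rfl]
      rw [← hn12R]; ring
    have hm1 : mfun 1 = 0 := by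
      simp only [hmfun]
      rw [pclamp_of_ge le_rfl, pclamp_of_ge ((one_le_div hβ0).2 hβ1)]
      ring
    obtain ⟨tstar, htstar_mem, htstarK⟩ :
        ∃ t, t ∈ Set.Icc (0:ℝ) 1 ∧ mfun t = K := by
      have h1 : (K:ℝ) ∈ Set.Icc (mfun 1) (mfun 0) := by
        rw [hm0, hm1]; exact ⟨Nat.cast_nonneg K, hKR⟩
      obtain ⟨t, ht, htK⟩ := intermediate_value_Icc' zero_le_one hmcont.continuousOn h1
      exact ⟨t, ht, htK⟩
    have hα : alpha1 K n₁ n₂ β = (n₁:ℝ) * pclamp tstar :=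
      alpha1_eq hβ0 hβ1 hdenom htstar_mem.1 htstar_mem.2 htstarK
    obtain ⟨tp, htp_mem, htpK⟩ :
        ∃ t, t ∈ Set.Icc (0:ℝ) 1 ∧ mfun t = K - Δ := by
      have h1 : (K:ℝ) - Δ ∈ Set.Icc (mfun 1) (mfun 0) := by
        rw [hm0, hm1]; exact ⟨by linarith, by linarith⟩
      obtain ⟨t, ht, htK⟩ := intermediate_value_Icc' zero_le_one hmcont.continuousOn h1
      exact ⟨t, ht, htK⟩
    obtain ⟨tm, htm_prop⟩ :
        ∃ t : ℝ, (mfun t = K + Δ ∧ t ∈ Set.Icc (0:ℝ) 1) ∨ ((n:ℝ) < K + Δ ∧ t = -1) := by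
      rcases le_or_gt ((K:ℝ) + Δ) (n:ℝ) with hKn | hKn
      · have h1 : (K:ℝ) + Δ ∈ Set.Icc (mfun 1) (mfun 0) := by
          rw [hm0, hm1]
          constructor
          · have h4 : (0:ℝ) ≤ K := Nat.cast_nonneg K
            linarith
          · exact hKn
        obtain ⟨t, ht, htK⟩ := intermediate_value_Icc' zero_le_one hmcont.continuousOn h1
        exact ⟨t, Or.inl ⟨htK, ht⟩⟩
      · exact ⟨-1, Or.inr ⟨hKn, rfl⟩⟩
    set B1 : Set Ω := {ω | Δ ≤
      |((Finset.univ.filter fun i => (if i ∈ G₁ then tp else tp / β) < v i ω).card : ℝ)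
        - ∑ i ∈ Finset.univ, pclamp (if i ∈ G₁ then tp else tp / β)|} with hB1
    set B2 : Set Ω := {ω | Δ ≤
      |((Finset.univ.filter fun i => (if i ∈ G₁ then tm else tm / β) < v i ω).card : ℝ)
        - ∑ i ∈ Finset.univ, pclamp (if i ∈ G₁ then tm else tm / β)|} with hB2
    set B3 : Set Ω := {ω | Δ ≤
      |((G₁.filter fun i => tp < v i ω).card : ℝ) - ∑ _i ∈ G₁, pclamp tp|} with hB3
    set B4 : Set Ω := {ω | Δ ≤
      |((G₁.filter fun i => tm < v i ω).card : ℝ) - ∑ _i ∈ G₁, pclamp tm|} with hB4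
    have hsum_all : ∀ t : ℝ,
        (∑ i ∈ Finset.univ, pclamp (if i ∈ G₁ then t else t / β)) = mfun t := by
      intro t
      rw [show (Finset.univ : Finset (Fin n)) = G₁ ∪ G₂ from hunion.symm,
        Finset.sum_union hdisj]
      simp only [hmfun]
      congr 1
      · rw [Finset.sum_congr rfl (fun i hi => by rw [if_pos hi]), Finset.sum_const, hG₁,
          nsmul_eq_mul]
      · rw [Finset.sum_congr rfl (fun i hi => by
          rw [if_neg (Finset.disjoint_right.1 hdisj hi)]), Finset.sum_const, hG₂,
          nsmul_eq_mul]
    have hsum_G1 : ∀ t : ℝ, (∑ _i ∈ G₁, pclamp t) = (n₁:ℝ) * pclamp t := by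
      intro t; rw [Finset.sum_const, hG₁, nsmul_eq_mul]
    refine final (Z0 ∪ Z1 ∪ Z2 ∪ B1 ∪ B2 ∪ B3 ∪ B4) _ ?_ ?_
    · have e1 : μ B1 ≤ ENNReal.ofReal (2/(n:ℝ)^2) := hchern _ _
      have e2 : μ B2 ≤ ENNReal.ofReal (2/(n:ℝ)^2) := hchern _ _
      have e3 : μ B3 ≤ ENNReal.ofReal (2/(n:ℝ)^2) := hchern _ _
      have e4 : μ B4 ≤ ENNReal.ofReal (2/(n:ℝ)^2) := hchern _ _
      have hz : μ (Z0 ∪ Z1 ∪ Z2) = 0 :=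
        measure_union_null (measure_union_null hZ0null hZ1null) hZ2null
      have step : μ (Z0 ∪ Z1 ∪ Z2 ∪ B1 ∪ B2 ∪ B3 ∪ B4)
          ≤ μ (Z0 ∪ Z1 ∪ Z2) + (μ B1 + (μ B2 + (μ B3 + μ B4))) := by
        calc μ (Z0 ∪ Z1 ∪ Z2 ∪ B1 ∪ B2 ∪ B3 ∪ B4)
            ≤ μ (Z0 ∪ Z1 ∪ Z2 ∪ B1 ∪ B2 ∪ B3) + μ B4 := measure_union_le _ _
          _ ≤ (μ (Z0 ∪ Z1 ∪ Z2 ∪ B1 ∪ B2) + μ B3) + μ B4 :=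
              add_le_add_left (measure_union_le _ _) _
          _ ≤ ((μ (Z0 ∪ Z1 ∪ Z2 ∪ B1) + μ B2) + μ B3) + μ B4 :=
              add_le_add_left (add_le_add_left (measure_union_le _ _) _) _
          _ ≤ (((μ (Z0 ∪ Z1 ∪ Z2) + μ B1) + μ B2) + μ B3) + μ B4 :=
              add_le_add_left (add_le_add_left (add_le_add_left
                (measure_union_le _ _) _) _) _
          _ = μ (Z0 ∪ Z1 ∪ Z2) + (μ B1 + (μ B2 + (μ B3 + μ B4))) := by ring
      refine le_trans step ?_
      rw [hz, zero_add]
      calc μ B1 + (μ B2 + (μ B3 + μ B4))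
          ≤ ENNReal.ofReal (2/(n:ℝ)^2) + (ENNReal.ofReal (2/(n:ℝ)^2)
            + (ENNReal.ofReal (2/(n:ℝ)^2) + ENNReal.ofReal (2/(n:ℝ)^2))) :=
            add_le_add e1 (add_le_add e2 (add_le_add e3 e4))
        _ = ENNReal.ofReal (8/(n:ℝ)^2) := by
            rw [← ENNReal.ofReal_add (by positivity) (by positivity),
              ← ENNReal.ofReal_add (by positivity) (by positivity),
              ← ENNReal.ofReal_add (by positivity) (by positivity)]
            congr 1
            ring
    · intro ω hω
      simp only [Set.mem_compl_iff, Set.mem_union, not_or] at hω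
      obtain ⟨⟨⟨⟨⟨⟨hω0, hω1⟩, hω2⟩, hωb1⟩, hωb2⟩, hωb3⟩, hωb4⟩ := hω
      rw [hZ0] at hω0
      rw [hZ1] at hω1
      rw [hZ2] at hω2
      have h0 : ∀ i, u i ω = v i ω := by
        intro i; by_contra h
        exact hω0 ⟨i, h⟩
      have hv0 : ∀ i, 0 ≤ v i ω := by
        intro i; by_contra h
        push_neg at h
        exact hω2 ⟨i, h⟩
      have hinj : Function.Injective (fun i => c i * v i ω) := by
        intro i j hij
        by_contra hne
        exact hω1 ⟨i, j, hne, hij⟩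
      have hfilt_all : ∀ t : ℝ,
          (Finset.univ.filter fun i => (if i ∈ G₁ then t else t / β) < v i ω)
            = Finset.univ.filter fun i => t < c i * v i ω := by
        intro t
        apply Finset.filter_congr
        intro i _
        by_cases h : i ∈ G₁
        · simp [hc, h]
        · simp only [hc, if_neg h]
          rw [div_lt_iff₀ hβ0, mul_comm]
      have hfilt_G1 : ∀ t : ℝ,
          (G₁.filter fun i => t < v i ω)
            = (Finset.univ.filter fun i => t < c i * v i ω) ∩ G₁ := by
        intro t
        ext i
        simp only [Finset.mem_filter, Finset.mem_inter, Finset.mem_univ, true_and]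
        constructor
        · rintro ⟨hiG, hlt⟩
          refine ⟨?_, hiG⟩
          simp only [hc, if_pos hiG, one_mul]
          exact hlt
        · rintro ⟨hlt, hiG⟩
          refine ⟨hiG, ?_⟩
          simpa only [hc, if_pos hiG, one_mul] using hlt
      rw [hB1] at hωb1
      rw [hB2] at hωb2
      rw [hB3] at hωb3
      rw [hB4] at hωb4
      simp only [Set.mem_setOf_eq, not_le] at hωb1 hωb2 hωb3 hωb4
      rw [hfilt_all tp, hsum_all tp] at hωb1
      rw [hfilt_all tm, hsum_all tm] at hωb2
      rw [hsum_G1 tp] at hωb3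
      rw [hsum_G1 tm] at hωb4
      have hb1 := hωb1
      have hb2 := hωb2
      have hb3 := hωb3
      have hb4 := hωb4
      have hNpK : (Finset.univ.filter fun i => tp < c i * v i ω).card ≤ K := by
        rw [abs_lt] at hb1
        have h2 : ((Finset.univ.filter fun i => tp < c i * v i ω).card : ℝ) < K := by
          linarith [hb1.2, htpK]
        have h3 : (Finset.univ.filter fun i => tp < c i * v i ω).card < K := by
          exact_mod_cast h2
        omega
      have hNmK : K ≤ (Finset.univ.filter fun i => tm < c i * v i ω).card := by
        rcases htm_prop with ⟨htmK, htm_mem⟩ | ⟨hKn, rfl⟩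
        · rw [abs_lt] at hb2
          have h2 : (K:ℝ) < ((Finset.univ.filter fun i => tm < c i * v i ω).card : ℝ) := by
            linarith [hb2.1, htmK]
          have h3 : K < (Finset.univ.filter fun i => tm < c i * v i ω).card := by
            exact_mod_cast h2
          omega
        · have hfull : (Finset.univ.filter fun i => (-1:ℝ) < c i * v i ω)
              = Finset.univ := by
            apply Finset.filter_true_of_mem
            intro i _
            have h5 := mul_nonneg (hcpos i).le (hv0 i)
            linarith
          rw [hfull, Finset.card_univ, Fintype.card_fin]
          exact hK
      have hsub_top := topK_subset (x := fun i => c i * v i ω) (K := K) hNmK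
      have hsub_bot := subset_topK (x := fun i => c i * v i ω) (K := K) hNpK
      have hup : ((topK K (fun i => c i * v i ω) ∩ G₁).card : ℝ)
          ≤ ((G₁.filter fun i => tm < v i ω).card : ℝ) := by
        have hss : topK K (fun i => c i * v i ω) ∩ G₁ ⊆ G₁.filter fun i => tm < v i ω := by
          rw [hfilt_G1 tm]
          exact Finset.inter_subset_inter hsub_top (Finset.Subset.refl G₁)
        exact_mod_cast Finset.card_le_card hss
      have hlowc : ((G₁.filter fun i => tp < v i ω).card : ℝ)
          ≤ ((topK K (fun i => c i * v i ω) ∩ G₁).card : ℝ) := by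
        have hss : (G₁.filter fun i => tp < v i ω) ⊆ topK K (fun i => c i * v i ω) ∩ G₁ := by
          rw [hfilt_G1 tp]
          exact Finset.inter_subset_inter hsub_bot (Finset.Subset.refl G₁)
        exact_mod_cast Finset.card_le_card hss
      have etp : (n₁:ℝ) * pclamp tp + (n₂:ℝ) * pclamp (tp / β) = K - Δ := by
        rw [← htpK]
      have etstar : (n₁:ℝ) * pclamp tstar + (n₂:ℝ) * pclamp (tstar / β) = K := by
        rw [← htstarK]
      have hcomp_p : |(n₁:ℝ) * pclamp tp - (n₁:ℝ) * pclamp tstar| ≤ Δ := by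
        have h2 := comp_bound (n₁ := n₁) (n₂ := n₂) (β := β) hβ0 tp tstar
        have h3 : ((n₁:ℝ) * pclamp tp + (n₂:ℝ) * pclamp (tp / β))
            - ((n₁:ℝ) * pclamp tstar + (n₂:ℝ) * pclamp (tstar / β)) = -Δ := by
          rw [etp, etstar]; ring
        rwa [h3, abs_neg, abs_of_nonneg hΔ0.le] at h2
      have hcomp_m : (n₁:ℝ) * pclamp tm ≤ alpha1 K n₁ n₂ β + Δ := by
        rcases htm_prop with ⟨htmK, htm_mem⟩ | ⟨hKn, rfl⟩
        · have h2 := comp_bound (n₁ := n₁) (n₂ := n₂) (β := β) hβ0 tm tstar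
          have etm : (n₁:ℝ) * pclamp tm + (n₂:ℝ) * pclamp (tm / β) = K + Δ := by
            rw [← htmK]
          have h3 : ((n₁:ℝ) * pclamp tm + (n₂:ℝ) * pclamp (tm / β))
              - ((n₁:ℝ) * pclamp tstar + (n₂:ℝ) * pclamp (tstar / β)) = Δ := by
            rw [etm, etstar]; ring
          rw [h3, abs_of_nonneg hΔ0.le, abs_le] at h2
          linarith [h2.2, hα]
        · rw [pclamp_of_nonpos (by norm_num : (-1:ℝ) ≤ 0), mul_one, hα]
          have h5 : 0 ≤ (n₂:ℝ) * (1 - pclamp (tstar / β)) :=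
            mul_nonneg (Nat.cast_nonneg n₂) (by linarith [pclamp_le_one (tstar / β)])
          linarith [etstar, hn12R, hKn, h5]
      have hfinal1 : |((topK K (fun i => c i * v i ω) ∩ G₁).card : ℝ)
          - alpha1 K n₁ n₂ β| ≤ 8 * Real.sqrt ((n:ℝ) * Real.log n) := by
        rw [abs_le]
        rw [abs_lt] at hb3 hb4
        rw [abs_le] at hcomp_p
        constructor
        · linarith [hlowc, hb3.1, hcomp_p.2, hα, hsq]
        · linarith [hup, hb4.2, hcomp_m, hsq]
      exact hmem ω h0 hinj hfinal1
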